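/- The functional J[λ] = ∫_0^1 (λ̇_t)² / (λ_t (1 − λ_t)) dt over C¹ curves λ : [0,1] → (0,1) with boundary values λ_0 = 0, λ_1 = 1 is convex, and its unique minimiser is the cosine schedule λ_t = sin²(π t / 2), at which J attains the value π². -/

import Mathlib

open MeasureTheory Real Set

noncomputable section

/-- The action upper-bound functional J[λ] = ∫₀¹ λ̇² / (λ(1-λ)) dt. -/
def Jfun (f : ℝ → ℝ) : ℝ :=
  ∫ t in (0 : ℝ)..1, (deriv f t) ^ 2 / (f t * (1 - f t))

/-- Admissible C¹ schedules with boundary values 0 and 1, interior values in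
(0,1), and finite action upper bound. -/
def Admissible : Set (ℝ → ℝ) :=
  {f | ContDiffOn ℝ 1 f (Icc (0 : ℝ) 1) ∧ f 0 = 0 ∧ f 1 = 1 ∧
    (∀ t ∈ Ioo (0 : ℝ) 1, f t ∈ Ioo (0 : ℝ) 1) ∧
    IntervalIntegrable (fun t => (deriv f t) ^ 2 / (f t * (1 - f t)))
      volume 0 1}

/-- The cosine schedule. -/
def cosSchedule : ℝ → ℝ := fun t => Real.sin (Real.pi * t / 2) ^ 2

namespace CosMin

/-- The integrand of `Jfun`. -/
def Ifn (f : ℝ → ℝ) : ℝ → ℝ := fun t => (deriv f t) ^ 2 / (f t * (1 - f t))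

/-- The "square root" integrand. -/
def phi (f : ℝ → ℝ) : ℝ → ℝ := fun t => deriv f t / Real.sqrt (f t * (1 - f t))

lemma Jfun_eq (f : ℝ → ℝ) : Jfun f = ∫ t in (0:ℝ)..1, Ifn f t := rfl

lemma Icc_mem_nhds {t : ℝ} (ht : t ∈ Ioo (0:ℝ) 1) : Icc (0:ℝ) 1 ∈ nhds t :=
  mem_nhds_iff.mpr ⟨Ioo 0 1, Ioo_subset_Icc_self, isOpen_Ioo, ht⟩

lemma diffAt {f : ℝ → ℝ} (hf : ContDiffOn ℝ 1 f (Icc (0:ℝ) 1)) {t : ℝ}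
    (ht : t ∈ Ioo (0:ℝ) 1) : DifferentiableAt ℝ f t :=
  ((hf.differentiableOn one_ne_zero) t (Ioo_subset_Icc_self ht)).differentiableAt
    (Icc_mem_nhds ht)

lemma derivCont {f : ℝ → ℝ} (hf : ContDiffOn ℝ 1 f (Icc (0:ℝ) 1)) :
    ContinuousOn (deriv f) (Ioo (0:ℝ) 1) := by
  have h1 : ContinuousOn (derivWithin f (Icc (0:ℝ) 1)) (Icc (0:ℝ) 1) :=
    hf.continuousOn_derivWithin (uniqueDiffOn_Icc zero_lt_one) le_rfl
  refine (h1.mono Ioo_subset_Icc_self).congr ?_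
  intro t ht
  exact (derivWithin_of_mem_nhds (Icc_mem_nhds ht)).symm

lemma denom_pos {f : ℝ → ℝ} (hint : ∀ t ∈ Ioo (0:ℝ) 1, f t ∈ Ioo (0:ℝ) 1)
    {t : ℝ} (ht : t ∈ Ioo (0:ℝ) 1) : 0 < f t * (1 - f t) := by
  have := hint t ht
  have h1 := this.1
  have h2 := this.2
  nlinarith

lemma IfnCont {f : ℝ → ℝ} (hf : ContDiffOn ℝ 1 f (Icc (0:ℝ) 1))
    (hint : ∀ t ∈ Ioo (0:ℝ) 1, f t ∈ Ioo (0:ℝ) 1) :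
    ContinuousOn (Ifn f) (Ioo (0:ℝ) 1) := by
  apply ContinuousOn.div
  · exact (derivCont hf).pow 2
  · exact ((hf.continuousOn.mono Ioo_subset_Icc_self).mul
      (continuousOn_const.sub (hf.continuousOn.mono Ioo_subset_Icc_self)))
  · intro t ht; exact (denom_pos hint ht).ne'

lemma phiCont {f : ℝ → ℝ} (hf : ContDiffOn ℝ 1 f (Icc (0:ℝ) 1))
    (hint : ∀ t ∈ Ioo (0:ℝ) 1, f t ∈ Ioo (0:ℝ) 1) :
    ContinuousOn (phi f) (Ioo (0:ℝ) 1) := by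
  apply ContinuousOn.div
  · exact derivCont hf
  · exact (((hf.continuousOn.mono Ioo_subset_Icc_self).mul
      (continuousOn_const.sub (hf.continuousOn.mono Ioo_subset_Icc_self)))).sqrt
  · intro t ht
    exact (Real.sqrt_pos.mpr (denom_pos hint ht)).ne'

lemma phi_sq {f : ℝ → ℝ} (hint : ∀ t ∈ Ioo (0:ℝ) 1, f t ∈ Ioo (0:ℝ) 1)
    {t : ℝ} (ht : t ∈ Ioo (0:ℝ) 1) : phi f t ^ 2 = Ifn f t := by
  have h := denom_pos hint ht
  simp only [phi, Ifn, div_pow, Real.sq_sqrt h.le]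

end CosMin
namespace CosMin

lemma Ifn_integrableOn {f : ℝ → ℝ} (hf : f ∈ Admissible) :
    IntegrableOn (Ifn f) (Ioo (0:ℝ) 1) volume := by
  have h := hf.2.2.2.2
  have h2 : IntegrableOn (Ifn f) (Ioc (0:ℝ) 1) volume :=
    (intervalIntegrable_iff_integrableOn_Ioc_of_le zero_le_one).mp h
  exact (integrableOn_Ioc_iff_integrableOn_Ioo).mp h2

lemma phi_integrableOn {f : ℝ → ℝ} (hf : f ∈ Admissible) :
    IntegrableOn (phi f) (Ioo (0:ℝ) 1) volume := by
  have hb : IntegrableOn (fun t => Ifn f t + 1) (Ioo (0:ℝ) 1) volume :=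
    (Ifn_integrableOn hf).add ((integrableOn_const_iff).mpr (Or.inr (by simp)))
  refine Integrable.mono' hb ?_ ?_
  · exact ((phiCont hf.1 hf.2.2.2.1).aestronglyMeasurable measurableSet_Ioo)
  · filter_upwards [ae_restrict_mem measurableSet_Ioo] with t ht
    have hsq := phi_sq hf.2.2.2.1 ht
    have h0 : (0:ℝ) ≤ Ifn f t := by
      rw [← hsq]; positivity
    have : |phi f t| ≤ Ifn f t + 1 := by
      nlinarith [sq_nonneg (|phi f t| - 1), sq_abs (phi f t)]
    simpa [Real.norm_eq_abs] using this

lemma phi_intervalIntegrable {f : ℝ → ℝ} (hf : f ∈ Admissible) :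
    IntervalIntegrable (phi f) volume 0 1 := by
  rw [intervalIntegrable_iff_integrableOn_Ioc_of_le zero_le_one]
  exact (integrableOn_Ioc_iff_integrableOn_Ioo).mpr (phi_integrableOn hf)

lemma arcsin_cont {f : ℝ → ℝ} (hf : ContDiffOn ℝ 1 f (Icc (0:ℝ) 1)) :
    ContinuousOn (fun w => Real.arcsin (2 * f w - 1)) (Icc (0:ℝ) 1) :=
  Real.continuous_arcsin.comp_continuousOn
    ((continuousOn_const.mul hf.continuousOn).sub continuousOn_const)

lemma arcsin_hasDeriv {f : ℝ → ℝ} (hf : ContDiffOn ℝ 1 f (Icc (0:ℝ) 1))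
    (hint : ∀ t ∈ Ioo (0:ℝ) 1, f t ∈ Ioo (0:ℝ) 1) {u : ℝ} (hu : u ∈ Ioo (0:ℝ) 1) :
    HasDerivAt (fun w => Real.arcsin (2 * f w - 1)) (phi f u) u := by
  have hfu := hint u hu
  have hx1 : 2 * f u - 1 ≠ -1 := by have := hfu.1; intro h; linarith [h]
  have hx2 : 2 * f u - 1 ≠ 1 := by have := hfu.2; intro h; linarith [h]
  have hin : HasDerivAt (fun w => 2 * f w - 1) (2 * deriv f u) u :=
    (((diffAt hf hu).hasDerivAt).const_mul 2).sub_const 1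
  have h := (Real.hasDerivAt_arcsin hx1 hx2).comp u hin
  have hden : 1 - (2 * f u - 1) ^ 2 = 4 * (f u * (1 - f u)) := by ring
  have hpos : 0 < f u * (1 - f u) := denom_pos hint hu
  have hsq : Real.sqrt (1 - (2 * f u - 1) ^ 2) = 2 * Real.sqrt (f u * (1 - f u)) := by
    rw [hden, show (4:ℝ) * (f u * (1 - f u)) = 2^2 * (f u * (1-f u)) by ring,
      Real.sqrt_mul (by positivity), Real.sqrt_sq (by norm_num : (0:ℝ) ≤ 2)]
  refine h.congr_deriv ?_
  rw [hsq, phi]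
  have h3 : Real.sqrt (f u * (1 - f u)) ≠ 0 := (Real.sqrt_pos.mpr hpos).ne'
  field_simp

lemma ftc_full {f : ℝ → ℝ} (hf : f ∈ Admissible) :
    ∫ u in (0:ℝ)..1, phi f u = Real.pi := by
  have h := intervalIntegral.integral_eq_sub_of_hasDeriv_right_of_le zero_le_one
    (arcsin_cont hf.1)
    (fun u hu => (arcsin_hasDeriv hf.1 hf.2.2.2.1 hu).hasDerivWithinAt)
    (phi_intervalIntegrable hf)
  rw [h, hf.2.1, hf.2.2.1]
  rw [show (2:ℝ) * 1 - 1 = 1 by ring, show (2:ℝ) * 0 - 1 = -1 by ring,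
    Real.arcsin_one, Real.arcsin_neg_one]
  ring

end CosMin
namespace CosMin

lemma Ifn_intervalIntegrable {f : ℝ → ℝ} (hf : f ∈ Admissible) :
    IntervalIntegrable (Ifn f) volume 0 1 := hf.2.2.2.2

lemma lower_aux {f : ℝ → ℝ} (hf : f ∈ Admissible) {u : ℝ} (hu : u ∈ Icc (0:ℝ) 1) :
    2 * Real.pi * phi f u - Real.pi ^ 2 ≤ Ifn f u := by
  rcases eq_or_lt_of_le hu.1 with h0 | h0
  · have hf0 : f u = 0 := by rw [← h0]; exact hf.2.1
    simp only [Ifn, phi, hf0, mul_zero, zero_mul, sub_zero, mul_one, div_zero,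
      Real.sqrt_zero]
    nlinarith [Real.pi_pos]
  rcases eq_or_lt_of_le hu.2 with h1 | h1
  · have hf1 : f u = 1 := by rw [h1]; exact hf.2.2.1
    simp only [Ifn, phi, hf1, sub_self, mul_zero, div_zero, Real.sqrt_zero]
    nlinarith [Real.pi_pos]
  · have hu' : u ∈ Ioo (0:ℝ) 1 := ⟨h0, h1⟩
    have hsq := phi_sq hf.2.2.2.1 hu'
    nlinarith [sq_nonneg (phi f u - Real.pi)]

lemma lower_bound {f : ℝ → ℝ} (hf : f ∈ Admissible) : Real.pi ^ 2 ≤ Jfun f := by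
  have hintlhs : IntervalIntegrable
      (fun u => 2 * Real.pi * phi f u - Real.pi ^ 2) volume 0 1 :=
    ((phi_intervalIntegrable hf).const_mul (2 * Real.pi)).sub intervalIntegrable_const
  have hmono : ∫ u in (0:ℝ)..1, (2 * Real.pi * phi f u - Real.pi ^ 2)
      ≤ ∫ u in (0:ℝ)..1, Ifn f u :=
    intervalIntegral.integral_mono_on zero_le_one hintlhs (Ifn_intervalIntegrable hf)
      (fun u hu => lower_aux hf hu)
  have hval : ∫ u in (0:ℝ)..1, (2 * Real.pi * phi f u - Real.pi ^ 2) = Real.pi ^ 2 := by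
    rw [intervalIntegral.integral_sub
      ((phi_intervalIntegrable hf).const_mul (2 * Real.pi)) intervalIntegrable_const,
      intervalIntegral.integral_const_mul, ftc_full hf, intervalIntegral.integral_const]
    simp; ring
  rw [Jfun_eq]
  linarith [hmono, hval.symm.le]

lemma zero_of_ae {k : ℝ → ℝ} (hk : ContinuousOn k (Ioo (0:ℝ) 1))
    (h : ∀ᵐ u ∂(volume.restrict (Ioo (0:ℝ) 1)), k u = 0) {t : ℝ}
    (ht : t ∈ Ioo (0:ℝ) 1) : k t = 0 := by
  by_contra hne
  have hct : ContinuousAt k t := hk.continuousAt (isOpen_Ioo.mem_nhds ht)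
  have h1 : ∀ᶠ u in nhds t, k u ≠ 0 := hct.eventually_ne hne
  have h2 : {u | k u ≠ 0} ∩ Ioo 0 1 ∈ nhds t :=
    Filter.inter_mem h1 (isOpen_Ioo.mem_nhds ht)
  obtain ⟨δ, hδ, hball⟩ := Metric.mem_nhds_iff.mp h2
  rw [ae_iff, Measure.restrict_apply' measurableSet_Ioo] at h
  have hle : volume (Metric.ball t δ) ≤ volume ({u | ¬ k u = 0} ∩ Ioo 0 1) :=
    measure_mono hball
  rw [h, Real.volume_ball] at hle
  simp only [nonpos_iff_eq_zero, ENNReal.ofReal_eq_zero] at hle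
  linarith

lemma phi_eq_pi {f : ℝ → ℝ} (hf : f ∈ Admissible) (hJ : Jfun f = Real.pi ^ 2)
    {u : ℝ} (hu : u ∈ Ioo (0:ℝ) 1) : phi f u = Real.pi := by
  set μ := volume.restrict (Ioo (0:ℝ) 1) with hμ
  have hIint : IntegrableOn (Ifn f) (Ioo (0:ℝ) 1) volume := Ifn_integrableOn hf
  have hpint : IntegrableOn (phi f) (Ioo (0:ℝ) 1) volume := phi_integrableOn hf
  have hg : Integrable (fun u => Ifn f u - 2 * Real.pi * phi f u + Real.pi ^ 2) μ :=
    (hIint.sub (hpint.const_mul (2 * Real.pi))).add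
      ((integrableOn_const_iff).mpr (Or.inr (by simp)))
  have hkg : ∀ᵐ u ∂μ, Ifn f u - 2 * Real.pi * phi f u + Real.pi ^ 2
      = (phi f u - Real.pi) ^ 2 := by
    filter_upwards [ae_restrict_mem measurableSet_Ioo] with u hu'
    have hsq := phi_sq hf.2.2.2.1 hu'
    nlinarith []
  have hk : Integrable (fun u => (phi f u - Real.pi) ^ 2) μ := hg.congr hkg
  have hIoo_I : ∫ u in Ioo (0:ℝ) 1, Ifn f u = Real.pi ^ 2 := by
    rw [← MeasureTheory.integral_Ioc_eq_integral_Ioo,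
      ← intervalIntegral.integral_of_le zero_le_one]
    rw [Jfun_eq] at hJ; exact hJ
  have hIoo_phi : ∫ u in Ioo (0:ℝ) 1, phi f u = Real.pi := by
    rw [← MeasureTheory.integral_Ioc_eq_integral_Ioo,
      ← intervalIntegral.integral_of_le zero_le_one]
    exact ftc_full hf
  have h1 : Integrable (fun u => Ifn f u - 2 * Real.pi * phi f u) μ :=
    hIint.sub (hpint.const_mul (2 * Real.pi))
  have h2 : Integrable (fun _ : ℝ => Real.pi ^ 2) μ :=
    (integrableOn_const_iff).mpr (Or.inr (by simp))
  have h3 : Integrable (fun u => 2 * Real.pi * phi f u) μ :=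
    hpint.const_mul (2 * Real.pi)
  have hzero : ∫ u, (phi f u - Real.pi) ^ 2 ∂μ = 0 := by
    have e1 : ∫ u, (Ifn f u - 2 * Real.pi * phi f u + Real.pi ^ 2) ∂μ
        = (∫ u, (Ifn f u - 2 * Real.pi * phi f u) ∂μ) + ∫ _, (Real.pi ^ 2 : ℝ) ∂μ :=
      MeasureTheory.integral_add h1 h2
    have e2 : ∫ u, (Ifn f u - 2 * Real.pi * phi f u) ∂μ
        = (∫ u, Ifn f u ∂μ) - ∫ u, 2 * Real.pi * phi f u ∂μ :=
      MeasureTheory.integral_sub hIint h3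
    have e3 : ∫ u, 2 * Real.pi * phi f u ∂μ = 2 * Real.pi * ∫ u, phi f u ∂μ :=
      MeasureTheory.integral_const_mul _ _
    have e4 : ∫ _, (Real.pi ^ 2 : ℝ) ∂μ = Real.pi ^ 2 := by
      simp [hμ, Real.volume_Ioo]
    rw [← MeasureTheory.integral_congr_ae hkg, e1, e2, e3, e4, hIoo_I, hIoo_phi]
    ring
  have hae : ∀ᵐ u ∂μ, (phi f u - Real.pi) ^ 2 = 0 := by
    have h := (MeasureTheory.integral_eq_zero_iff_of_nonneg_ae
      (Filter.Eventually.of_forall (fun u => sq_nonneg _)) hk).mp hzero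
    filter_upwards [h] with u hu'
    simpa using hu'
  have h0 : (phi f u - Real.pi) ^ 2 = 0 := by
    refine zero_of_ae ?_ hae hu
    exact (((phiCont hf.1 hf.2.2.2.1).sub continuousOn_const).pow 2)
  have := pow_eq_zero_iff (n := 2) (by norm_num) |>.mp h0
  linarith [sub_eq_zero.mp this]

end CosMin
namespace CosMin

lemma sin_sq_half' (x : ℝ) : Real.sin (x / 2) ^ 2 = (1 - Real.cos x) / 2 := by
  have h := Real.cos_sq (x / 2)
  rw [show 2 * (x / 2) = x by ring] at h
  have h2 := Real.sin_sq_add_cos_sq (x / 2)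
  linarith

lemma cos_hasDerivAt (t : ℝ) :
    HasDerivAt cosSchedule (Real.pi / 2 * Real.sin (Real.pi * t)) t := by
  have h1 : HasDerivAt (fun t : ℝ => Real.pi * t / 2) (Real.pi / 2) t := by
    simpa using ((hasDerivAt_id t).const_mul Real.pi).div_const 2
  have h2 := ((Real.hasDerivAt_sin (Real.pi * t / 2)).comp t h1).pow 2
  refine h2.congr_deriv ?_
  simp only [Function.comp_apply]
  norm_num
  rw [show Real.pi * t = 2 * (Real.pi * t / 2) by ring, Real.sin_two_mul]
  ring

lemma cos_mem_Ioo {t : ℝ} (ht : t ∈ Ioo (0:ℝ) 1) : cosSchedule t ∈ Ioo (0:ℝ) 1 := by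
  have hpi := Real.pi_pos
  have hx0 : 0 < Real.pi * t / 2 := by nlinarith [ht.1]
  have hx2 : Real.pi * t / 2 < Real.pi / 2 := by nlinarith [ht.2]
  have hs : 0 < Real.sin (Real.pi * t / 2) :=
    Real.sin_pos_of_pos_of_lt_pi hx0 (by nlinarith)
  have hc : 0 < Real.cos (Real.pi * t / 2) :=
    Real.cos_pos_of_mem_Ioo ⟨by nlinarith, hx2⟩
  simp only [cosSchedule]
  constructor
  · exact pow_pos hs 2
  · nlinarith [Real.sin_sq_add_cos_sq (Real.pi * t / 2)]

lemma cos_integrand {t : ℝ} (ht : t ∈ Ioo (0:ℝ) 1) :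
    Ifn cosSchedule t = Real.pi ^ 2 := by
  have hd : deriv cosSchedule t = Real.pi / 2 * Real.sin (Real.pi * t) :=
    (cos_hasDerivAt t).deriv
  have hs : 0 < Real.sin (Real.pi * t) := by
    apply Real.sin_pos_of_pos_of_lt_pi
    · nlinarith [Real.pi_pos, ht.1]
    · nlinarith [Real.pi_pos, ht.2]
  have hdenom : cosSchedule t * (1 - cosSchedule t) = (Real.sin (Real.pi * t) / 2) ^ 2 := by
    have h1 : 1 - cosSchedule t = Real.cos (Real.pi * t / 2) ^ 2 := by
      have := Real.sin_sq_add_cos_sq (Real.pi * t / 2)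
      simp only [cosSchedule]; linarith
    have h2 : Real.sin (Real.pi * t) =
        2 * Real.sin (Real.pi * t / 2) * Real.cos (Real.pi * t / 2) := by
      have h3 := Real.sin_two_mul (Real.pi * t / 2)
      rw [show 2 * (Real.pi * t / 2) = Real.pi * t by ring] at h3
      exact h3
    rw [h1, h2]; simp only [cosSchedule]; ring
  simp only [Ifn, hd, hdenom]
  rw [div_eq_iff (by positivity)]
  ring

lemma ae_ne_one : ∀ᵐ t : ℝ, t ≠ (1:ℝ) := by
  have h : volume ({(1:ℝ)} : Set ℝ) = 0 := Real.volume_singleton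
  rw [ae_iff]
  convert h using 2
  ext x; simp

lemma cos_contDiff : ContDiffOn ℝ 1 cosSchedule (Icc (0:ℝ) 1) := by
  apply ContDiff.contDiffOn
  exact (Real.contDiff_sin.comp ((contDiff_const.mul contDiff_id).div_const 2)).pow 2

lemma cos_integrable : IntervalIntegrable (Ifn cosSchedule) volume 0 1 := by
  refine (intervalIntegrable_const (c := Real.pi ^ 2)).congr_ae ?_
  filter_upwards [ae_restrict_mem measurableSet_uIoc, ae_restrict_of_ae ae_ne_one]
    with t htm hne
  rw [Set.uIoc_of_le zero_le_one] at htm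
  exact (cos_integrand ⟨htm.1, lt_of_le_of_ne htm.2 hne⟩).symm

lemma cos_admissible : cosSchedule ∈ Admissible := by
  refine ⟨cos_contDiff, ?_, ?_, fun t ht => cos_mem_Ioo ht, cos_integrable⟩
  · simp [cosSchedule]
  · simp only [cosSchedule]
    rw [show Real.pi * 1 / 2 = Real.pi / 2 by ring, Real.sin_pi_div_two]
    norm_num

lemma Jfun_cos : Jfun cosSchedule = Real.pi ^ 2 := by
  rw [Jfun_eq]
  rw [intervalIntegral.integral_congr_ae (g := fun _ => Real.pi ^ 2) ?_]
  · simp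
  · filter_upwards [ae_ne_one] with t hne htm
    rw [Set.uIoc_of_le zero_le_one] at htm
    exact cos_integrand ⟨htm.1, lt_of_le_of_ne htm.2 hne⟩

lemma eq_cos {f : ℝ → ℝ} (hf : f ∈ Admissible) (hJ : Jfun f = Real.pi ^ 2) :
    Set.EqOn f cosSchedule (Icc (0:ℝ) 1) := by
  intro t ht
  have harc : Real.arcsin (2 * f t - 1) = Real.pi * t - Real.pi / 2 := by
    have h := intervalIntegral.integral_eq_sub_of_hasDeriv_right_of_le ht.1
      ((arcsin_cont hf.1).mono (Icc_subset_Icc le_rfl ht.2))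
      (f' := fun _ => Real.pi)
      (fun u hu => by
        have hu' : u ∈ Ioo (0:ℝ) 1 := ⟨hu.1, lt_of_lt_of_le hu.2 ht.2⟩
        have hd := arcsin_hasDeriv hf.1 hf.2.2.2.1 hu'
        rw [phi_eq_pi hf hJ hu'] at hd
        exact hd.hasDerivWithinAt)
      intervalIntegrable_const
    rw [hf.2.1, intervalIntegral.integral_const] at h
    rw [show (2:ℝ) * 0 - 1 = -1 by ring, Real.arcsin_neg_one] at h
    simp at h
    linarith
  have hft : f t ∈ Icc (0:ℝ) 1 := by
    rcases eq_or_lt_of_le ht.1 with h0 | h0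
    · rw [← h0, hf.2.1]; exact ⟨le_rfl, zero_le_one⟩
    rcases eq_or_lt_of_le ht.2 with h1 | h1
    · rw [h1, hf.2.2.1]; exact ⟨zero_le_one, le_rfl⟩
    · exact Ioo_subset_Icc_self (hf.2.2.2.1 t ⟨h0, h1⟩)
  have hsin : 2 * f t - 1 = Real.sin (Real.pi * t - Real.pi / 2) := by
    rw [← harc, Real.sin_arcsin (by linarith [hft.1]) (by linarith [hft.2])]
  have hsin2 : Real.sin (Real.pi * t - Real.pi / 2) = -Real.cos (Real.pi * t) := by
    rw [Real.sin_sub]; simp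
  have hcs : cosSchedule t = (1 - Real.cos (Real.pi * t)) / 2 := by
    rw [cosSchedule, ← sin_sq_half' (Real.pi * t)]
  rw [hcs]
  rw [hsin2] at hsin
  linarith

end CosMin
namespace CosMin

lemma engel {a b u v p q : ℝ} (ha : 0 ≤ a) (hb : 0 ≤ b) (hab : a + b = 1)
    (hp : 0 < p) (hq : 0 < q) :
    (a*u + b*v)^2 / (a*p + b*q) ≤ a*(u^2/p) + b*(v^2/q) := by
  have hd : 0 < a*p + b*q := by
    rcases eq_or_lt_of_le ha with h | h
    · have hb1 : b = 1 := by linarith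
      rw [← h, hb1]; simpa using hq
    · nlinarith [mul_nonneg hb hq.le, mul_pos h hp]
  have e : a*(u^2/p) + b*(v^2/q) = (a*u^2*q + b*v^2*p)/(p*q) := by
    field_simp
    try ring
  rw [e, div_le_div_iff₀ hd (mul_pos hp hq)]
  nlinarith [mul_nonneg (mul_nonneg ha hb) (sq_nonneg (u*q - v*p))]

lemma key_ineq {x y u v a b : ℝ} (hx : x ∈ Ioo (0:ℝ) 1) (hy : y ∈ Ioo (0:ℝ) 1)
    (ha : 0 ≤ a) (hb : 0 ≤ b) (hab : a + b = 1) :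
    (a*u + b*v)^2 / ((a*x + b*y) * (1 - (a*x + b*y)))
      ≤ a*(u^2/(x*(1-x))) + b*(v^2/(y*(1-y))) := by
  have hp : 0 < x*(1-x) := by nlinarith [hx.1, hx.2]
  have hq : 0 < y*(1-y) := by nlinarith [hy.1, hy.2]
  have hd : 0 < a*(x*(1-x)) + b*(y*(1-y)) := by
    rcases eq_or_lt_of_le ha with h | h
    · have hb1 : b = 1 := by linarith
      rw [← h, hb1]; simpa using hq
    · nlinarith [mul_nonneg hb hq.le, mul_pos h hp]
  have heq : (a*x + b*y) * (1 - (a*x + b*y)) - (a*(x*(1-x)) + b*(y*(1-y)))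
      = a*b*(x-y)^2 := by linear_combination (-(a*x^2 + b*y^2)) * hab
  have hcc : a*(x*(1-x)) + b*(y*(1-y)) ≤ (a*x + b*y) * (1 - (a*x + b*y)) := by
    nlinarith [heq, mul_nonneg (mul_nonneg ha hb) (sq_nonneg (x - y))]
  calc (a*u + b*v)^2 / ((a*x + b*y) * (1 - (a*x + b*y)))
      ≤ (a*u + b*v)^2 / (a*(x*(1-x)) + b*(y*(1-y))) := by
        gcongr
        try exact sq_nonneg _
    _ ≤ _ := engel ha hb hab hp hq

lemma deriv_combo {f g : ℝ → ℝ} (hf : ContDiffOn ℝ 1 f (Icc (0:ℝ) 1))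
    (hg : ContDiffOn ℝ 1 g (Icc (0:ℝ) 1)) (a b : ℝ) {t : ℝ} (ht : t ∈ Ioo (0:ℝ) 1) :
    deriv (a • f + b • g) t = a * deriv f t + b * deriv g t := by
  have h1 : HasDerivAt (a • f + b • g) (a * deriv f t + b * deriv g t) t :=
    (((diffAt hf ht).hasDerivAt.const_mul a).add
      ((diffAt hg ht).hasDerivAt.const_mul b))
  exact h1.deriv

lemma combo_bound {f g : ℝ → ℝ} (hf : f ∈ Admissible) (hg : g ∈ Admissible)
    {a b : ℝ} (ha : 0 ≤ a) (hb : 0 ≤ b) (hab : a + b = 1) {t : ℝ}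
    (ht : t ∈ Ioo (0:ℝ) 1) :
    Ifn (a • f + b • g) t ≤ a * Ifn f t + b * Ifn g t := by
  have hd := deriv_combo hf.1 hg.1 a b ht
  have h := key_ineq (u := deriv f t) (v := deriv g t)
    (hf.2.2.2.1 t ht) (hg.2.2.2.1 t ht) ha hb hab
  simp only [Ifn, hd, Pi.add_apply, Pi.smul_apply, smul_eq_mul]
  exact h

lemma combo_interior {f g : ℝ → ℝ} (hf : f ∈ Admissible) (hg : g ∈ Admissible)
    {a b : ℝ} (ha : 0 ≤ a) (hb : 0 ≤ b) (hab : a + b = 1) :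
    ∀ t ∈ Ioo (0:ℝ) 1, (a • f + b • g) t ∈ Ioo (0:ℝ) 1 := fun t ht =>
  (convex_Ioo (0:ℝ) 1) (hf.2.2.2.1 t ht) (hg.2.2.2.1 t ht) ha hb hab

lemma combo_contDiff {f g : ℝ → ℝ} (hf : f ∈ Admissible) (hg : g ∈ Admissible)
    (a b : ℝ) : ContDiffOn ℝ 1 (a • f + b • g) (Icc (0:ℝ) 1) :=
  (hf.1.const_smul a).add (hg.1.const_smul b)

lemma combo_mem {f g : ℝ → ℝ} (hf : f ∈ Admissible) (hg : g ∈ Admissible)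
    {a b : ℝ} (ha : 0 ≤ a) (hb : 0 ≤ b) (hab : a + b = 1) :
    (a • f + b • g) ∈ Admissible := by
  refine ⟨combo_contDiff hf hg a b, ?_, ?_, combo_interior hf hg ha hb hab, ?_⟩
  · show a * f 0 + b * g 0 = 0
    rw [hf.2.1, hg.2.1]; ring
  · show a * f 1 + b * g 1 = 1
    rw [hf.2.2.1, hg.2.2.1]; linarith
  · have hI : IntervalIntegrable (Ifn (a • f + b • g)) volume 0 1 := by
      rw [intervalIntegrable_iff_integrableOn_Ioc_of_le zero_le_one,
        integrableOn_Ioc_iff_integrableOn_Ioo]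
      have hbd : IntegrableOn (fun t => a * Ifn f t + b * Ifn g t) (Ioo (0:ℝ) 1)
          volume := ((Ifn_integrableOn hf).const_mul a).add
        ((Ifn_integrableOn hg).const_mul b)
      refine Integrable.mono' hbd ?_ ?_
      · exact (IfnCont (combo_contDiff hf hg a b)
          (combo_interior hf hg ha hb hab)).aestronglyMeasurable measurableSet_Ioo
      · filter_upwards [ae_restrict_mem measurableSet_Ioo] with t ht
        have h0 : 0 ≤ Ifn (a • f + b • g) t := by
          have := denom_pos (combo_interior hf hg ha hb hab) ht
          exact div_nonneg (sq_nonneg _) this.le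
        rw [Real.norm_eq_abs, abs_of_nonneg h0]
        exact combo_bound hf hg ha hb hab ht
    exact hI

lemma convexJ : ConvexOn ℝ Admissible Jfun := by
  refine ⟨fun f hf g hg a b ha hb hab => combo_mem hf hg ha hb hab, ?_⟩
  intro f hf g hg a b ha hb hab
  have hcadm := combo_mem hf hg ha hb hab
  have hineq := intervalIntegral.integral_mono_on zero_le_one
    (Ifn_intervalIntegrable hcadm)
    (((Ifn_intervalIntegrable hf).const_mul a).add
      ((Ifn_intervalIntegrable hg).const_mul b)) ?_
  · have hsplit : ∫ t in (0:ℝ)..1, (a * Ifn f t + b * Ifn g t)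
        = a * Jfun f + b * Jfun g := by
      rw [intervalIntegral.integral_add ((Ifn_intervalIntegrable hf).const_mul a)
        ((Ifn_intervalIntegrable hg).const_mul b),
        intervalIntegral.integral_const_mul, intervalIntegral.integral_const_mul,
        Jfun_eq f, Jfun_eq g]
    have hfinal : Jfun (a • f + b • g) ≤ a * Jfun f + b * Jfun g := by
      calc Jfun (a • f + b • g) = ∫ t in (0:ℝ)..1, Ifn (a • f + b • g) t := Jfun_eq _
        _ ≤ ∫ t in (0:ℝ)..1, (a * Ifn f t + b * Ifn g t) := hineq
        _ = a * Jfun f + b * Jfun g := hsplit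
    simpa [smul_eq_mul] using hfinal
  · intro t ht
    rcases eq_or_lt_of_le ht.1 with h0 | h0
    · have hc0 : (a • f + b • g) t = 0 := by
        show a * f t + b * g t = 0
        rw [← h0, hf.2.1, hg.2.1]; ring
      have hf0 : f t = 0 := by rw [← h0]; exact hf.2.1
      have hg0 : g t = 0 := by rw [← h0]; exact hg.2.1
      simp [Ifn, hc0, hf0, hg0]
    rcases eq_or_lt_of_le ht.2 with h1 | h1
    · have hc1 : (a • f + b • g) t = 1 := by
        show a * f t + b * g t = 1
        rw [h1, hf.2.2.1, hg.2.2.1]; linarith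
      have hf1 : f t = 1 := by rw [h1]; exact hf.2.2.1
      have hg1 : g t = 1 := by rw [h1]; exact hg.2.2.1
      simp [Ifn, hc1, hf1, hg1]
    · exact combo_bound hf hg ha hb hab ⟨h0, h1⟩

end CosMin
/-- **The functional J is convex and is uniquely minimised by the cosine
schedule, at which it attains the value π².** -/
theorem cosine_schedule_minimises_action_bound :
    ConvexOn ℝ Admissible Jfun ∧
    cosSchedule ∈ Admissible ∧
    (∀ f ∈ Admissible, Jfun cosSchedule ≤ Jfun f) ∧
    (∀ f ∈ Admissible, Jfun f = Jfun cosSchedule →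
      Set.EqOn f cosSchedule (Icc (0 : ℝ) 1)) ∧
    Jfun cosSchedule = Real.pi ^ 2 := by
  refine ⟨CosMin.convexJ, CosMin.cos_admissible, ?_, ?_, CosMin.Jfun_cos⟩
  · intro f hf
    rw [CosMin.Jfun_cos]
    exact CosMin.lower_bound hf
  · intro f hf hJ
    rw [CosMin.Jfun_cos] at hJ
    exact CosMin.eq_cos hf hJ
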